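/- Two *-functors ω, ω' : C → ℂ on a full commutative C*-category C are unitarily equivalent if and only if their restrictions to every diagonal block agree: ω|_{C_{AA}} = ω'|_{C_{AA}} for all objects A. -/

import Mathlib

open ComplexConjugate

/-- A C*-category: Hom spaces are complex Banach spaces, composition is bilinear and
submultiplicative, and there is an antilinear involutive contravariant *-operation fixing
objects, satisfying the C*-identity and positivity. -/
class CStarCat (O : Type*) (Hom : O → O → Type*)
    [∀ A B, NormedAddCommGroup (Hom A B)] [∀ A B, NormedSpace ℂ (Hom A B)] where
  complete : ∀ A B, CompleteSpace (Hom A B)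
  comp : ∀ {A B C : O}, Hom A B → Hom B C → Hom A C
  ide : ∀ A : O, Hom A A
  comp_assoc : ∀ {A B C D : O} (x : Hom A B) (y : Hom B C) (z : Hom C D),
      comp (comp x y) z = comp x (comp y z)
  ide_comp : ∀ {A B : O} (x : Hom A B), comp (ide A) x = x
  comp_ide : ∀ {A B : O} (x : Hom A B), comp x (ide B) = x
  comp_add_left : ∀ {A B C : O} (x y : Hom A B) (z : Hom B C),
      comp (x + y) z = comp x z + comp y z
  comp_add_right : ∀ {A B C : O} (x : Hom A B) (y z : Hom B C),
      comp x (y + z) = comp x y + comp x z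
  comp_smul_left : ∀ {A B C : O} (c : ℂ) (x : Hom A B) (z : Hom B C),
      comp (c • x) z = c • comp x z
  comp_smul_right : ∀ {A B C : O} (c : ℂ) (x : Hom A B) (z : Hom B C),
      comp x (c • z) = c • comp x z
  norm_comp_le : ∀ {A B C : O} (x : Hom A B) (y : Hom B C), ‖comp x y‖ ≤ ‖x‖ * ‖y‖
  invol : ∀ {A B : O}, Hom A B → Hom B A
  invol_invol : ∀ {A B : O} (x : Hom A B), invol (invol x) = x
  invol_add : ∀ {A B : O} (x y : Hom A B), invol (x + y) = invol x + invol y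
  invol_smul : ∀ {A B : O} (c : ℂ) (x : Hom A B), invol (c • x) = (conj c) • invol x
  invol_comp : ∀ {A B C : O} (x : Hom A B) (y : Hom B C),
      invol (comp x y) = comp (invol y) (invol x)
  norm_invol_comp : ∀ {A B : O} (x : Hom A B), ‖comp (invol x) x‖ = ‖x‖ ^ 2
  pos : ∀ {A B : O} (x : Hom A B), ∃ y : Hom B B, comp (invol x) x = comp (invol y) y

/-- A ℂ-valued *-functor on a C*-category (ℂ viewed as a one-object C*-category). -/
structure CChar (O : Type*) (Hom : O → O → Type*)
    [∀ A B, NormedAddCommGroup (Hom A B)] [∀ A B, NormedSpace ℂ (Hom A B)]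
    [CStarCat O Hom] where
  ω : ∀ {A B : O}, Hom A B → ℂ
  map_add : ∀ {A B : O} (x y : Hom A B), ω (x + y) = ω x + ω y
  map_smul : ∀ {A B : O} (c : ℂ) (x : Hom A B), ω (c • x) = c * ω x
  map_comp : ∀ {A B C : O} (x : Hom A B) (y : Hom B C),
      ω (CStarCat.comp x y) = ω x * ω y
  map_ide : ∀ A : O, ω (CStarCat.ide A) = 1
  map_invol : ∀ {A B : O} (x : Hom A B), ω (CStarCat.invol x) = conj (ω x)

/-- Unitary equivalence of ℂ-valued *-functors, by a unitary natural transformation. -/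
def UnitEquiv {O : Type*} {Hom : O → O → Type*}
    [∀ A B, NormedAddCommGroup (Hom A B)] [∀ A B, NormedSpace ℂ (Hom A B)]
    [CStarCat O Hom] (ω ω' : CChar O Hom) : Prop :=
  ∃ ν : O → ℂ, (∀ A, ‖ν A‖ = 1) ∧
    ∀ {A B : O} (x : Hom A B), ω'.ω x * ν B = ν A * ω.ω x

/-- A C*-category is commutative if every diagonal block is a commutative C*-algebra. -/
def IsCommutative (O : Type*) (Hom : O → O → Type*)
    [∀ A B, NormedAddCommGroup (Hom A B)] [∀ A B, NormedSpace ℂ (Hom A B)]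
    [CStarCat O Hom] : Prop :=
  ∀ (A : O) (x y : Hom A A), CStarCat.comp x y = CStarCat.comp y x

/-- A C*-category is full if for all objects A, B the span of the products
C_{AB} ∘ C_{BA} is dense in C_{AA} (imprimitivity of the off-diagonal bimodules). -/
def IsFull (O : Type*) (Hom : O → O → Type*)
    [∀ A B, NormedAddCommGroup (Hom A B)] [∀ A B, NormedSpace ℂ (Hom A B)]
    [CStarCat O Hom] : Prop :=
  ∀ A B : O,
    closure ((Submodule.span ℂ
      {z : Hom A A | ∃ (x : Hom A B) (y : Hom B A), z = CStarCat.comp x y} :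
        Submodule ℂ (Hom A A)) : Set (Hom A A)) = Set.univ

section PROOFBODY
variable {O : Type*} {Hom : O → O → Type*}
  [∀ A B, NormedAddCommGroup (Hom A B)] [∀ A B, NormedSpace ℂ (Hom A B)]
  [CStarCat O Hom]

theorem CChar.map_zero' (ω : CChar O Hom) (A B : O) : ω.ω (0 : Hom A B) = 0 := by
  have h := ω.map_smul 0 (0 : Hom A B)
  simpa using h

theorem CChar.map_sub' (ω : CChar O Hom) {A B : O} (x y : Hom A B) :
    ω.ω (x - y) = ω.ω x - ω.ω y := by
  have h := ω.map_add (x - y) y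
  rw [sub_add_cancel] at h
  exact eq_sub_of_add_eq h.symm

/-- A character cannot send an element of norm `< 1` to `1`. -/
theorem CChar.ne_one_of_norm_lt_one (ω : CChar O Hom) {A : O} (u : Hom A A)
    (hu : ‖u‖ < 1) : ω.ω u ≠ 1 := by
  intro h1
  haveI : CompleteSpace (Hom A A) := CStarCat.complete A A
  set q : ℕ → Hom A A := fun n => Nat.rec u (fun _ c => CStarCat.comp u c) n with hq
  have hqs : ∀ n, q (n + 1) = CStarCat.comp u (q n) := fun n => rfl
  have hu0 : (0 : ℝ) ≤ ‖u‖ := norm_nonneg u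
  have hnorm : ∀ n, ‖q n‖ ≤ ‖u‖ ^ (n + 1) := by
    intro n
    induction n with
    | zero => simpa [hq] using le_refl ‖u‖
    | succ n ih =>
      calc ‖q (n + 1)‖ ≤ ‖u‖ * ‖q n‖ := CStarCat.norm_comp_le u (q n)
        _ ≤ ‖u‖ * ‖u‖ ^ (n + 1) := mul_le_mul_of_nonneg_left ih hu0
        _ = ‖u‖ ^ (n + 2) := by ring
  have hsum : Summable q := by
    refine Summable.of_norm_bounded ?_ hnorm
    refine ((summable_geometric_of_lt_one hu0 hu).mul_left ‖u‖).congr fun n => ?_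
    ring
  set Lf : Hom A A →ₗ[ℂ] Hom A A :=
    { toFun := fun z => CStarCat.comp u z
      map_add' := fun a b => CStarCat.comp_add_right u a b
      map_smul' := fun c z => CStarCat.comp_smul_right c u z } with hLf
  set L : Hom A A →L[ℂ] Hom A A :=
    Lf.mkContinuous ‖u‖ (fun z => CStarCat.norm_comp_le u z) with hL
  set c : Hom A A := ∑' n, q n with hc
  have hLc : CStarCat.comp u c = ∑' n, q (n + 1) := by
    have h := L.map_tsum hsum
    simpa [hL, hLf, LinearMap.mkContinuous_apply, hqs] using h
  have hkey : c = u + CStarCat.comp u c := by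
    rw [hLc]
    exact hsum.tsum_eq_zero_add
  have h2 := congrArg ω.ω hkey
  rw [ω.map_add, ω.map_comp, h1, one_mul] at h2
  exact one_ne_zero (right_eq_add.mp h2)

theorem CChar.exists_omega_ne_zero (hf : IsFull O Hom) (ω : CChar O Hom) (A B : O) :
    ∃ x : Hom A B, ω.ω x ≠ 0 := by
  by_contra h
  push_neg at h
  have hspan : ∀ z ∈ Submodule.span ℂ
      {z : Hom A A | ∃ (x : Hom A B) (y : Hom B A), z = CStarCat.comp x y},
      ω.ω z = 0 := by
    intro z hz
    induction hz using Submodule.span_induction with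
    | mem z hz =>
      obtain ⟨x, y, rfl⟩ := hz
      rw [ω.map_comp, h x, zero_mul]
    | zero => exact ω.map_zero' A A
    | add a b _ _ ha hb => rw [ω.map_add, ha, hb, add_zero]
    | smul c a _ ha => rw [ω.map_smul, ha, mul_zero]
  have hmem : CStarCat.ide A ∈ closure ((Submodule.span ℂ
      {z : Hom A A | ∃ (x : Hom A B) (y : Hom B A), z = CStarCat.comp x y} :
        Submodule ℂ (Hom A A)) : Set (Hom A A)) := by
    rw [hf A B]; trivial
  rw [Metric.mem_closure_iff] at hmem
  obtain ⟨z, hzmem, hdist⟩ := hmem 1 one_pos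
  refine ω.ne_one_of_norm_lt_one (CStarCat.ide A - z) ?_ ?_
  · rw [← dist_eq_norm]; exact hdist
  · rw [ω.map_sub', ω.map_ide, hspan z hzmem, sub_zero]

theorem CChar.conj_prod_eq (ω ω' : CChar O Hom)
    (hagree : ∀ (A : O) (x : Hom A A), ω.ω x = ω'.ω x)
    {A B : O} (p q : Hom A B) :
    ω'.ω p * conj (ω'.ω q) = ω.ω p * conj (ω.ω q) := by
  have h := hagree A (CStarCat.comp p (CStarCat.invol q))
  rw [ω.map_comp, ω.map_invol, ω'.map_comp, ω'.map_invol] at h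
  exact h.symm

theorem CChar.key_ratio (ω ω' : CChar O Hom)
    (hagree : ∀ (A : O) (x : Hom A A), ω.ω x = ω'.ω x)
    {A B : O} (x y : Hom A B) :
    ω'.ω x * ω.ω y = ω.ω x * ω'.ω y := by
  have h1 := ω.conj_prod_eq ω' hagree x y
  have h2 := ω.conj_prod_eq ω' hagree y y
  by_cases hy : ω'.ω y = 0
  · have hy0 : ω.ω y = 0 := by
      have h3 : (Complex.normSq (ω.ω y) : ℂ) = 0 := by
        rw [← Complex.mul_conj, ← h2, hy]; ring
      have h4 : Complex.normSq (ω.ω y) = 0 := by exact_mod_cast h3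
      exact Complex.normSq_eq_zero.mp h4
    rw [hy, hy0]; ring
  · have hcb : conj (ω'.ω y) ≠ 0 := by simpa using hy
    refine mul_right_cancel₀ hcb ?_
    linear_combination (ω.ω y) * h1 - (ω.ω x) * h2

theorem CChar.norm_omega_eq (ω ω' : CChar O Hom)
    (hagree : ∀ (A : O) (x : Hom A A), ω.ω x = ω'.ω x)
    {A B : O} (x : Hom A B) : ‖ω'.ω x‖ = ‖ω.ω x‖ := by
  have h2 := ω.conj_prod_eq ω' hagree x x
  rw [Complex.mul_conj, Complex.mul_conj] at h2
  have h3 : Complex.normSq (ω'.ω x) = Complex.normSq (ω.ω x) := by exact_mod_cast h2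
  rw [Complex.norm_def, Complex.norm_def, h3]

end PROOFBODY

/-- On a full commutative C*-category, two ℂ-valued *-functors are
unitarily equivalent iff their restrictions to every diagonal block agree. -/
theorem unitEquiv_iff_agree_on_diagonals
    {O : Type*} {Hom : O → O → Type*}
    [∀ A B, NormedAddCommGroup (Hom A B)] [∀ A B, NormedSpace ℂ (Hom A B)]
    [CStarCat O Hom]
    (hc : IsCommutative O Hom) (hf : IsFull O Hom)
    (ω ω' : CChar O Hom) :
    UnitEquiv ω ω' ↔ ∀ (A : O) (x : Hom A A), ω.ω x = ω'.ω x := by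
  constructor
  · rintro ⟨ν, hν, hnat⟩ A x
    have h := hnat x
    have hνA : ν A ≠ 0 := by
      intro h0
      have h1 := hν A
      rw [h0] at h1
      simp at h1
    refine (mul_left_cancel₀ hνA ?_).symm
    rw [← h, mul_comm]
  · intro hagree
    rcases isEmpty_or_nonempty O with hO | hO
    · refine ⟨fun _ => 1, fun A => norm_one, ?_⟩
      intro A B x
      exact (IsEmpty.false A).elim
    · obtain ⟨A₀⟩ := hO
      have hch : ∀ A : O, ∃ y : Hom A A₀, ω.ω y ≠ 0 :=
        fun A => CChar.exists_omega_ne_zero hf ω A A₀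
      choose y hy using hch
      refine ⟨fun A => ω'.ω (y A) / ω.ω (y A), ?_, ?_⟩
      · intro A
        rw [norm_div, ω.norm_omega_eq ω' hagree (y A),
          div_self (norm_ne_zero_iff.mpr (hy A))]
      · intro A B x
        have hk := ω.key_ratio ω' hagree (CStarCat.comp x (y B)) (y A)
        rw [ω.map_comp, ω'.map_comp] at hk
        field_simp [hy A, hy B]
        linear_combination hk
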